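/- arXiv:1507.02039 — 2 statements merged into one kernel-verified Lean document; each statement's English description precedes it below -/
import Mathlib

section
/- Let 𝔠 ⊂ ℝ² be closed with ℝ² \ 𝔠 connected, and suppose ℝ² \ 𝔠 satisfies the Harnack Chain condition in ℝ². Then Ω = ℝ³ \ (𝔠 × ℝ) satisfies the Harnack Chain condition in ℝ³: for every ρ > 0, Λ ≥ 1, and X, Y ∈ Ω with dist(X, ∂Ω) > ρ, dist(Y, ∂Ω) > ρ and |X − Y| ≤ Λρ, there is a chain of at most N(Λ) open balls B₁,…,B_N ⊂ Ω with X ∈ B₁, Y ∈ B_N, consecutive balls intersecting, and C⁻¹ diam(B_k) ≤ dist(B_k, ∂Ω) ≤ C diam(B_k). -/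
open Metric Set
open scoped ENNReal

noncomputable section

/-- Distance between two sets in a metric space. -/
def setDist {V : Type*} [PseudoMetricSpace V] (A B : Set V) : ℝ :=
  sInf (Set.image2 dist A B)

/-- The Harnack Chain condition for an open set `Ω`: for every `Λ ≥ 1` there is a bound
`N(Λ)` such that any two points of `Ω` at distance `≤ Λρ` from each other and at distance
`≥ ρ` from `∂Ω` can be joined by a chain of at most `N(Λ)` open balls contained in `Ω`,
consecutive balls intersecting, each ball `B` satisfying
`C⁻¹ diam B ≤ dist(B, ∂Ω) ≤ C diam B`. -/
def HarnackChainCond {V : Type*} [PseudoMetricSpace V] (Ω : Set V) : Prop :=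
  ∃ C : ℝ, 1 ≤ C ∧ ∀ Λ : ℝ, 1 ≤ Λ → ∃ N : ℕ, ∀ ρ : ℝ, 0 < ρ →
    ∀ X ∈ Ω, ∀ Y ∈ Ω, ρ ≤ Metric.infDist X (frontier Ω) →
      ρ ≤ Metric.infDist Y (frontier Ω) → dist X Y ≤ Λ * ρ →
      ∃ (k : ℕ) (cen : ℕ → V) (rad : ℕ → ℝ), k + 1 ≤ N ∧
        X ∈ ball (cen 0) (rad 0) ∧ Y ∈ ball (cen k) (rad k) ∧
        (∀ i ≤ k, 0 < rad i ∧ ball (cen i) (rad i) ⊆ Ω ∧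
          C⁻¹ * Metric.diam (ball (cen i) (rad i)) ≤
            setDist (ball (cen i) (rad i)) (frontier Ω) ∧
          setDist (ball (cen i) (rad i)) (frontier Ω) ≤
            C * Metric.diam (ball (cen i) (rad i))) ∧
        ∀ i < k, (ball (cen i) (rad i) ∩ ball (cen (i + 1)) (rad (i + 1))).Nonempty

abbrev R2 := EuclideanSpace ℝ (Fin 2)
abbrev R3 := WithLp 2 (R2 × ℝ)

/-- The cylinder `𝔠 × ℝ ⊂ ℝ³` over a planar set `𝔠`. -/
def cylinder (c : Set R2) : Set R3 :=
  (WithLp.equiv 2 (R2 × ℝ)).symm '' (c ×ˢ (Set.univ : Set ℝ))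

namespace HCAux

/-- The point `(x, s)` of `ℝ³`. -/
noncomputable def pt (x : R2) (s : ℝ) : R3 := (WithLp.equiv 2 (R2 × ℝ)).symm (x, s)

lemma pt_eta (P : R3) : pt P.fst P.snd = P := rfl

lemma pt_fst (x : R2) (s : ℝ) : (pt x s).fst = x := rfl

lemma pt_snd (x : R2) (s : ℝ) : (pt x s).snd = s := rfl

lemma dist_pt_eq (x y : R2) (s : ℝ) : dist (pt x s) (pt y s) = dist x y := by
  rw [WithLp.prod_dist_eq_of_L2]
  simp only [pt, WithLp.equiv_symm_apply, WithLp.toLp_fst, WithLp.toLp_snd]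
  simp [Real.sqrt_sq dist_nonneg]

lemma dist_pt_snd (y : R2) (s t : ℝ) : dist (pt y s) (pt y t) = dist s t := by
  rw [WithLp.prod_dist_eq_of_L2]
  simp only [pt, WithLp.equiv_symm_apply, WithLp.toLp_fst, WithLp.toLp_snd]
  simp [Real.sqrt_sq dist_nonneg]

lemma dist_fst_le (P Q : R3) : dist P.fst Q.fst ≤ dist P Q := by
  rw [WithLp.prod_dist_eq_of_L2]
  have h := Real.sqrt_le_sqrt (le_add_of_nonneg_right (sq_nonneg (dist P.snd Q.snd)) :
    dist P.fst Q.fst ^ 2 ≤ dist P.fst Q.fst ^ 2 + dist P.snd Q.snd ^ 2)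
  rwa [Real.sqrt_sq dist_nonneg] at h

lemma dist_snd_le (P Q : R3) : dist P.snd Q.snd ≤ dist P Q := by
  rw [WithLp.prod_dist_eq_of_L2]
  have h := Real.sqrt_le_sqrt (le_add_of_nonneg_left (sq_nonneg (dist P.fst Q.fst)) :
    dist P.snd Q.snd ^ 2 ≤ dist P.fst Q.fst ^ 2 + dist P.snd Q.snd ^ 2)
  rwa [Real.sqrt_sq dist_nonneg] at h

lemma mem_cyl {A : Set R2} {P : R3} : P ∈ cylinder A ↔ P.fst ∈ A := by
  constructor
  · rintro ⟨q, hq, rfl⟩; exact hq.1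
  · intro h; exact ⟨(P.fst, P.snd), ⟨h, trivial⟩, rfl⟩

lemma cyl_empty : cylinder (∅ : Set R2) = ∅ := by
  ext P; simp [mem_cyl]

lemma mem_closure_cyl {A : Set R2} {P : R3} :
    P ∈ closure (cylinder A) ↔ P.fst ∈ closure A := by
  simp only [Metric.mem_closure_iff]
  constructor
  · intro h ε hε
    obtain ⟨Q, hQ, hd⟩ := h ε hε
    exact ⟨Q.fst, mem_cyl.1 hQ, lt_of_le_of_lt (dist_fst_le P Q) hd⟩
  · intro h ε hε
    obtain ⟨a, ha, hd⟩ := h ε hε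
    refine ⟨pt a P.snd, mem_cyl.2 ha, ?_⟩
    have e : dist P (pt a P.snd) = dist P.fst a := dist_pt_eq P.fst a P.snd
    rw [e]; exact hd

lemma mem_interior_cyl {A : Set R2} {P : R3} :
    P ∈ interior (cylinder A) ↔ P.fst ∈ interior A := by
  simp only [mem_interior_iff_mem_nhds, Metric.mem_nhds_iff]
  constructor
  · rintro ⟨ε, hε, hb⟩
    refine ⟨ε, hε, fun w hw => ?_⟩
    have : pt w P.snd ∈ ball P ε := by
      rw [mem_ball]
      have e : dist (pt w P.snd) P = dist w P.fst := dist_pt_eq w P.fst P.snd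
      rw [e]; exact hw
    exact mem_cyl.1 (hb this)
  · rintro ⟨ε, hε, hb⟩
    refine ⟨ε, hε, fun Q hQ => ?_⟩
    refine mem_cyl.2 (hb ?_)
    rw [mem_ball]
    exact lt_of_le_of_lt (dist_fst_le Q P) hQ

lemma frontier_cyl (A : Set R2) : frontier (cylinder A) = cylinder (frontier A) := by
  ext P
  simp only [frontier, mem_diff, mem_closure_cyl, mem_interior_cyl, mem_cyl]

lemma infDist_cyl {A : Set R2} (hA : A.Nonempty) (P : R3) :
    infDist P (cylinder A) = infDist P.fst A := by
  have hA' : (cylinder A).Nonempty := ⟨pt hA.choose 0, mem_cyl.2 hA.choose_spec⟩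
  apply le_antisymm
  · refine le_of_forall_pos_le_add fun ε hε => ?_
    obtain ⟨a, ha, hd⟩ := (infDist_lt_iff hA).1 (lt_add_of_pos_right _ hε)
    refine le_trans (infDist_le_dist_of_mem (mem_cyl.2 ha : pt a P.snd ∈ cylinder A)) ?_
    have e : dist P (pt a P.snd) = dist P.fst a := dist_pt_eq P.fst a P.snd
    rw [e]; exact hd.le
  · refine le_of_forall_pos_le_add fun ε hε => ?_
    obtain ⟨Q, hQ, hd⟩ := (infDist_lt_iff hA').1 (lt_add_of_pos_right _ hε)
    refine le_trans (infDist_le_dist_of_mem (mem_cyl.1 hQ)) ?_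
    exact le_trans (dist_fst_le P Q) hd.le

lemma setDist_nonneg {V : Type*} [PseudoMetricSpace V] (A B : Set V) :
    0 ≤ setDist A B :=
  Real.sInf_nonneg (by rintro x ⟨a, _, b, _, rfl⟩; exact dist_nonneg)

lemma setDist_le_dist {V : Type*} [PseudoMetricSpace V] {A B : Set V} {a b : V}
    (ha : a ∈ A) (hb : b ∈ B) : setDist A B ≤ dist a b :=
  csInf_le ⟨0, by rintro x ⟨a', _, b', _, rfl⟩; exact dist_nonneg⟩
    (mem_image2_of_mem ha hb)

lemma le_setDist {V : Type*} [PseudoMetricSpace V] {A B : Set V} {r : ℝ}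
    (hA : A.Nonempty) (hB : B.Nonempty) (h : ∀ a ∈ A, ∀ b ∈ B, r ≤ dist a b) :
    r ≤ setDist A B :=
  le_csInf ⟨dist hA.choose hB.choose, mem_image2_of_mem hA.choose_spec hB.choose_spec⟩
    (by rintro x ⟨a, ha, b, hb, rfl⟩; exact h a ha b hb)

lemma setDist_le_infDist {V : Type*} [PseudoMetricSpace V] {A B : Set V} {a : V}
    (ha : a ∈ A) (hB : B.Nonempty) : setDist A B ≤ infDist a B := by
  refine le_of_forall_pos_le_add fun ε hε => ?_
  obtain ⟨b, hb, hd⟩ := (infDist_lt_iff hB).1 (lt_add_of_pos_right _ hε)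
  exact (setDist_le_dist ha hb).trans hd.le

lemma diam_ball_lb {E : Type*} [NormedAddCommGroup E] [NormedSpace ℝ E] [Nontrivial E]
    (z : E) {r : ℝ} (hr : 0 < r) : r ≤ Metric.diam (ball z r) := by
  obtain ⟨v, hv⟩ := exists_norm_eq E (show (0:ℝ) ≤ r/2 by linarith)
  have h1 : z + v ∈ ball z r := by
    rw [mem_ball, dist_eq_norm, add_sub_cancel_left, hv]; linarith
  have h2 : z - v ∈ ball z r := by
    rw [mem_ball, dist_eq_norm, sub_sub_cancel_left, norm_neg, hv]; linarith
  have hd : dist (z + v) (z - v) = r := by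
    rw [dist_eq_norm]
    have : z + v - (z - v) = (2:ℝ) • v := by
      rw [two_smul]; abel
    rw [this, norm_smul, hv]
    simp; linarith
  calc r = dist (z + v) (z - v) := hd.symm
    _ ≤ Metric.diam (ball z r) := dist_le_diam_of_mem isBounded_ball h1 h2

lemma lift_setDist {E : Set R2} (hE : E.Nonempty) (z : R2) (s : ℝ) {r : ℝ} (hr : 0 < r) :
    setDist (ball (pt z s) r) (cylinder E) = setDist (ball z r) E := by
  apply le_antisymm
  · refine le_csInf ⟨dist z hE.choose, mem_image2_of_mem (mem_ball_self hr) hE.choose_spec⟩ ?_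
    rintro x ⟨w, hw, q, hq, rfl⟩
    have h1 : pt w s ∈ ball (pt z s) r := by rw [mem_ball, dist_pt_eq]; exact hw
    have h2 : pt q s ∈ cylinder E := mem_cyl.2 hq
    refine le_trans (setDist_le_dist h1 h2) ?_
    rw [dist_pt_eq]
  · refine le_setDist ⟨pt z s, mem_ball_self hr⟩ ⟨pt hE.choose 0, mem_cyl.2 hE.choose_spec⟩
      fun P hP Q hQ => ?_
    have hP1 : P.fst ∈ ball z r := by
      rw [mem_ball]
      calc dist P.fst z = dist P.fst (pt z s).fst := rfl
        _ ≤ dist P (pt z s) := dist_fst_le _ _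
        _ < r := hP
    exact (setDist_le_dist hP1 (mem_cyl.1 hQ)).trans (dist_fst_le P Q)

lemma ball_infDist_frontier_subset {c : Set R2} {y : R2} (hy : y ∉ c) :
    ball y (infDist y (frontier c)) ⊆ cᶜ := by
  set d := infDist y (frontier c) with hd
  rcases le_or_gt d 0 with h | h
  · rw [ball_eq_empty.2 h]; exact empty_subset _
  have hsub : ball y d ⊆ interior c ∪ (closure c)ᶜ := by
    intro w hw
    by_cases h1 : w ∈ interior c
    · exact Or.inl h1
    by_cases h2 : w ∈ closure c
    · exfalso
      have : w ∈ frontier c := ⟨h2, h1⟩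
      have := infDist_le_dist_of_mem (x := y) this
      rw [mem_ball] at hw
      rw [dist_comm] at hw
      linarith
    · exact Or.inr h2
  have := (convex_ball y d).isPreconnected.subset_or_subset isOpen_interior
    isClosed_closure.isOpen_compl
    (disjoint_compl_right.mono_left interior_subset_closure) hsub
  rcases this with h' | h'
  · exfalso
    exact hy (interior_subset (h' (mem_ball_self h)))
  · exact h'.trans (compl_subset_compl.2 subset_closure)

end HCAux

open HCAux

/-- If `𝔠 ⊂ ℝ²` is closed, `ℝ² \ 𝔠` is connected and satisfies the Harnack Chain
condition in `ℝ²`, then `Ω = ℝ³ \ (𝔠 × ℝ)` satisfies the Harnack Chain condition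
in `ℝ³`. -/
theorem stmt5 (c : Set R2) (hc : IsClosed c) (hconn : IsConnected (cᶜ))
    (h2 : HarnackChainCond (cᶜ)) :
    HarnackChainCond ((cylinder c)ᶜ) := by
  obtain ⟨C₂, hC₂, hH⟩ := h2
  set M := max C₂ 2 with hM
  have hM2 : (2:ℝ) ≤ M := le_max_right _ _
  have hMC : C₂ ≤ M := le_max_left _ _
  have hM0 : (0:ℝ) < M := by linarith
  have hC₂0 : (0:ℝ) < C₂ := by linarith
  refine ⟨2 * M, by linarith, fun Λ hΛ => ?_⟩
  obtain ⟨N₂, hN⟩ := hH Λ hΛ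
  set n := max 1 ⌈2 * Λ⌉₊ with hn
  have hn1 : 1 ≤ n := le_max_left _ _
  have hn0 : (0:ℝ) < (n:ℝ) := by exact_mod_cast hn1
  have hnΛ : 2 * Λ ≤ (n:ℝ) := by
    calc 2 * Λ ≤ (⌈2 * Λ⌉₊ : ℝ) := Nat.le_ceil _
      _ ≤ (n:ℝ) := by exact_mod_cast le_max_right _ _
  refine ⟨N₂ + n + 2, fun ρ hρ X hX Y hY hdX hdY hXY => ?_⟩
  have hF : frontier ((cylinder c)ᶜ) = cylinder (frontier c) := by
    rw [frontier_compl, frontier_cyl]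
  rcases (frontier c).eq_empty_or_nonempty with hE | hE
  · exfalso
    rw [hF, hE, cyl_empty] at hdX
    rw [Metric.infDist_empty] at hdX
    linarith
  -- notation
  have hx : X.fst ∉ c := fun h => hX (mem_cyl.2 h)
  have hy : Y.fst ∉ c := fun h => hY (mem_cyl.2 h)
  have hdx : ρ ≤ infDist X.fst (frontier c) := by
    rw [hF, infDist_cyl hE] at hdX; exact hdX
  have hdy : ρ ≤ infDist Y.fst (frontier c) := by
    rw [hF, infDist_cyl hE] at hdY; exact hdY
  have hdxy : dist X.fst Y.fst ≤ Λ * ρ := (dist_fst_le X Y).trans hXY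
  have hfc : frontier (cᶜ) = frontier c := frontier_compl c
  obtain ⟨k, z, r, hkN, hX0, hYk, hball, hinter⟩ :=
    hN ρ hρ X.fst hx Y.fst hy (by rw [hfc]; exact hdx) (by rw [hfc]; exact hdy) hdxy
  set d := infDist Y.fst (frontier c) with hdd
  have hd0 : 0 < d := lt_of_lt_of_le hρ hdy
  have hyball : ball Y.fst d ⊆ cᶜ := ball_infDist_frontier_subset hy
  set s := X.snd with hs
  set t := Y.snd with ht
  set u := (t - s) / (n:ℝ) with hu
  have hts : |t - s| ≤ Λ * ρ := by
    have h := (dist_snd_le X Y).trans hXY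
    rw [Real.dist_eq] at h
    show |Y.snd - X.snd| ≤ Λ * ρ
    rw [abs_sub_comm]; exact h
  have huρ : |u| ≤ ρ / 2 := by
    rw [hu, abs_div, abs_of_pos hn0, div_le_iff₀ hn0]
    have h1 : Λ * ρ * 2 ≤ ρ * (n:ℝ) := by
      have : 2 * Λ * ρ ≤ (n:ℝ) * ρ := mul_le_mul_of_nonneg_right hnΛ hρ.le
      nlinarith
    nlinarith
  -- the chain
  set K := k + 1 + n with hK
  set cen : ℕ → R3 := fun i => if i ≤ k then pt (z i) s
    else pt Y.fst (s + ((i - (k+1) : ℕ) : ℝ) * u) with hcen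
  set rad : ℕ → ℝ := fun i => if i ≤ k then r i else d / 2 with hrad
  have hcen_le : ∀ i ≤ k, cen i = pt (z i) s := fun i hi => by simp [hcen, hi]
  have hrad_le : ∀ i ≤ k, rad i = r i := fun i hi => by simp [hrad, hi]
  have hcen_gt : ∀ i, k < i → cen i = pt Y.fst (s + ((i - (k+1) : ℕ) : ℝ) * u) := by
    intro i hi; simp [hcen, Nat.not_le.2 hi]
  have hrad_gt : ∀ i, k < i → rad i = d / 2 := by
    intro i hi; simp [hrad, Nat.not_le.2 hi]
  -- vertical ball properties
  have hvert : ∀ τ : ℝ, 0 < d / 2 ∧ ball (pt Y.fst τ) (d/2) ⊆ (cylinder c)ᶜ ∧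
      (2*M)⁻¹ * Metric.diam (ball (pt Y.fst τ) (d/2)) ≤
        setDist (ball (pt Y.fst τ) (d/2)) (frontier ((cylinder c)ᶜ)) ∧
      setDist (ball (pt Y.fst τ) (d/2)) (frontier ((cylinder c)ᶜ)) ≤
        (2*M) * Metric.diam (ball (pt Y.fst τ) (d/2)) := by
    intro τ
    have hd2 : 0 < d / 2 := by linarith
    have hsubΩ : ball (pt Y.fst τ) (d/2) ⊆ (cylinder c)ᶜ := by
      intro P hP
      rw [mem_ball] at hP
      intro hPc
      have h1 : dist P.fst Y.fst < d := by
        calc dist P.fst Y.fst = dist P.fst (pt Y.fst τ).fst := rfl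
          _ ≤ dist P (pt Y.fst τ) := dist_fst_le _ _
          _ < d / 2 := hP
          _ < d := by linarith
      exact hyball (mem_ball.2 h1) (mem_cyl.1 hPc)
    have hdiam_ub : Metric.diam (ball (pt Y.fst τ) (d/2)) ≤ d := by
      have := diam_ball (x := pt Y.fst τ) hd2.le
      linarith
    have hdiam_lb : d / 2 ≤ Metric.diam (ball (pt Y.fst τ) (d/2)) :=
      diam_ball_lb _ hd2
    have hsd_lb : d / 2 ≤ setDist (ball (pt Y.fst τ) (d/2)) (frontier ((cylinder c)ᶜ)) := by
      rw [hF]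
      refine le_setDist ⟨pt Y.fst τ, mem_ball_self hd2⟩
        ⟨pt hE.choose 0, mem_cyl.2 hE.choose_spec⟩ fun P hP Q hQ => ?_
      have h1 : dist P.fst Y.fst < d / 2 := by
        calc dist P.fst Y.fst = dist P.fst (pt Y.fst τ).fst := rfl
          _ ≤ dist P (pt Y.fst τ) := dist_fst_le _ _
          _ < d / 2 := hP
      have h2 : infDist Y.fst (frontier c) ≤ infDist P.fst (frontier c) + dist Y.fst P.fst :=
        infDist_le_infDist_add_dist
      have h3 : infDist P.fst (frontier c) ≤ dist P.fst Q.fst :=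
        infDist_le_dist_of_mem (mem_cyl.1 hQ)
      have h4 : dist P.fst Q.fst ≤ dist P Q := dist_fst_le _ _
      rw [dist_comm] at h1
      linarith [hdd ▸ h2]
    have hsd_ub : setDist (ball (pt Y.fst τ) (d/2)) (frontier ((cylinder c)ᶜ)) ≤ d := by
      rw [hF]
      have := setDist_le_infDist (A := ball (pt Y.fst τ) (d/2)) (a := pt Y.fst τ)
        (mem_ball_self hd2)
        (⟨pt hE.choose 0, mem_cyl.2 hE.choose_spec⟩ : (cylinder (frontier c)).Nonempty)
      rw [infDist_cyl hE] at this
      exact this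
    refine ⟨hd2, hsubΩ, ?_, ?_⟩
    · have h1 : (2*M)⁻¹ * Metric.diam (ball (pt Y.fst τ) (d/2)) ≤ (2*M)⁻¹ * d :=
        mul_le_mul_of_nonneg_left hdiam_ub (by positivity)
      have h2 : (2*M)⁻¹ ≤ (4:ℝ)⁻¹ := by
        apply inv_anti₀ (by norm_num)
        linarith
      have h3 : (2*M)⁻¹ * d ≤ (4:ℝ)⁻¹ * d := mul_le_mul_of_nonneg_right h2 hd0.le
      linarith
    · calc setDist (ball (pt Y.fst τ) (d/2)) (frontier ((cylinder c)ᶜ)) ≤ d := hsd_ub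
        _ ≤ 2 * (d/2) := by linarith
        _ ≤ 2 * Metric.diam (ball (pt Y.fst τ) (d/2)) := by linarith
        _ ≤ (2*M) * Metric.diam (ball (pt Y.fst τ) (d/2)) := by
            apply mul_le_mul_of_nonneg_right _ (by linarith)
            linarith
  refine ⟨K, cen, rad, by omega, ?_, ?_, ?_, ?_⟩
  · -- X in first ball
    rw [hcen_le 0 (Nat.zero_le _), hrad_le 0 (Nat.zero_le _), mem_ball, ← pt_eta X,
      dist_pt_eq]
    exact hX0
  · -- Y in last ball
    have hKk : k < K := by omega
    rw [hcen_gt K hKk, hrad_gt K hKk]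
    have hKn : (K - (k+1) : ℕ) = n := by omega
    have hτ : s + ((K - (k+1) : ℕ) : ℝ) * u = t := by
      rw [hKn, hu]
      field_simp
      ring
    rw [hτ]
    have hYY : pt Y.fst t = Y := rfl
    rw [hYY]
    exact mem_ball_self (by linarith)
  · -- ball properties
    intro i hi
    rcases le_or_gt i k with hik | hik
    · -- horizontal
      obtain ⟨hri, hsub2, hlb2, hub2⟩ := hball i hik
      rw [hcen_le i hik, hrad_le i hik]
      rw [hfc] at hlb2 hub2
      have hsd3 : setDist (ball (pt (z i) s) (r i)) (frontier ((cylinder c)ᶜ)) =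
          setDist (ball (z i) (r i)) (frontier c) := by
        rw [hF]; exact lift_setDist hE _ _ hri
      have hdiam2_lb : r i ≤ Metric.diam (ball (z i) (r i)) := diam_ball_lb _ hri
      have hdiam2_ub : Metric.diam (ball (z i) (r i)) ≤ 2 * r i := diam_ball hri.le
      have hdiam3_lb : r i ≤ Metric.diam (ball (pt (z i) s) (r i)) := diam_ball_lb _ hri
      have hdiam3_ub : Metric.diam (ball (pt (z i) s) (r i)) ≤ 2 * r i := diam_ball hri.le
      refine ⟨hri, ?_, ?_, ?_⟩
      · intro P hP
        rw [mem_ball] at hP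
        intro hPc
        have h1 : dist P.fst (z i) < r i := by
          calc dist P.fst (z i) = dist P.fst (pt (z i) s).fst := rfl
            _ ≤ dist P (pt (z i) s) := dist_fst_le _ _
            _ < r i := hP
        exact hsub2 (mem_ball.2 h1) (mem_cyl.1 hPc)
      · rw [hsd3]
        have h1 : (2*M)⁻¹ * Metric.diam (ball (pt (z i) s) (r i)) ≤ (2*M)⁻¹ * (2 * r i) :=
          mul_le_mul_of_nonneg_left hdiam3_ub (by positivity)
        have h2 : (2*M)⁻¹ * (2 * r i) = M⁻¹ * r i := by
          field_simp
        have h3 : M⁻¹ ≤ C₂⁻¹ := inv_anti₀ hC₂0 hMC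
        have h4 : M⁻¹ * r i ≤ C₂⁻¹ * r i := mul_le_mul_of_nonneg_right h3 hri.le
        have h5 : C₂⁻¹ * r i ≤ C₂⁻¹ * Metric.diam (ball (z i) (r i)) :=
          mul_le_mul_of_nonneg_left hdiam2_lb (by positivity)
        linarith
      · rw [hsd3]
        have h1 : setDist (ball (z i) (r i)) (frontier c) ≤
            C₂ * Metric.diam (ball (z i) (r i)) := hub2
        have h2 : C₂ * Metric.diam (ball (z i) (r i)) ≤ C₂ * (2 * r i) :=
          mul_le_mul_of_nonneg_left hdiam2_ub hC₂0.le
        have h3 : C₂ * (2 * r i) ≤ M * (2 * Metric.diam (ball (pt (z i) s) (r i))) := by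
          apply mul_le_mul hMC (by linarith) (by linarith) hM0.le
        linarith
    · -- vertical
      rw [hcen_gt i hik, hrad_gt i hik]
      exact hvert _
  · -- intersections
    intro i hi
    rcases lt_trichotomy i k with hik | hik | hik
    · -- horizontal-horizontal
      obtain ⟨w, hw1, hw2⟩ := hinter i hik
      refine ⟨pt w s, ?_, ?_⟩
      · rw [hcen_le i hik.le, hrad_le i hik.le, mem_ball, dist_pt_eq]
        exact hw1
      · rw [hcen_le (i+1) hik, hrad_le (i+1) hik, mem_ball, dist_pt_eq]
        exact hw2
    · -- junction i = k
      subst hik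
      refine ⟨pt Y.fst s, ?_, ?_⟩
      · rw [hcen_le i le_rfl, hrad_le i le_rfl, mem_ball, dist_pt_eq]
        exact hYk
      · rw [hcen_gt (i+1) (by omega), hrad_gt (i+1) (by omega), mem_ball]
        have : ((i + 1 - (i+1) : ℕ) : ℝ) = 0 := by norm_num
        rw [this, zero_mul, add_zero, dist_pt_snd]
        simpa [Real.dist_eq] using (by linarith : 0 < d / 2)
    · -- vertical-vertical
      have hik1 : k + 1 ≤ i := hik
      set j : ℕ := i - (k+1) with hj
      have hij : i = k + 1 + j := by omega
      have hj1 : (i + 1 - (k+1) : ℕ) = j + 1 := by omega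
      refine ⟨pt Y.fst (s + (j:ℝ) * u + u/2), ?_, ?_⟩
      · rw [hcen_gt i hik, hrad_gt i hik, mem_ball, dist_pt_snd, Real.dist_eq]
        have : s + (j:ℝ) * u + u/2 - (s + ((i - (k+1) : ℕ) : ℝ) * u) = u/2 := by
          rw [← hj]; ring
        rw [this, abs_div]
        simp only [abs_two]
        have : |u| / 2 ≤ ρ / 4 := by linarith
        linarith [hdy]
      · rw [hcen_gt (i+1) (by omega), hrad_gt (i+1) (by omega), mem_ball, dist_pt_snd,
          Real.dist_eq, hj1]
        have : s + (j:ℝ) * u + u/2 - (s + ((j+1 : ℕ) : ℝ) * u) = -(u/2) := by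
          push_cast; ring
        rw [this, abs_neg, abs_div]
        simp only [abs_two]
        have : |u| / 2 ≤ ρ / 4 := by linarith
        linarith [hdy]
end
end

section
/- Let E ⊂ ℝ^{n+1} be n-dimensional ADR and suppose a = 0 ∈ E, P = {x : x_{n+1} = 0}, and E satisfies the linear approximation conditions at 0 at scales below r₀ with parameter η sufficiently small (depending only on n and the ADR constant). Set ζ = η^{n/(n+1)}. Then for every 0 < r < η r₀, there exists a point X⁺ with X⁺_{n+1} > 4ζ r, |X⁺| < r, and dist(X⁺, E) ≥ 4ζr/N, where N depends only on n and the ADR constant; in particular B(X⁺, 2ζr/N) ⊂ B(0, 2r) \ E. -/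
open Metric MeasureTheory Set
open scoped ENNReal NNReal

noncomputable section

/-- `E` is a `k`-dimensional Ahlfors-David regular set with constant `C`. -/
def ADR {V : Type*} [MetricSpace V] [MeasurableSpace V] [BorelSpace V]
    (k : ℕ) (E : Set V) (C : ℝ≥0) : Prop :=
  1 ≤ C ∧ ∀ x ∈ E, ∀ r : ℝ, 0 < r → ENNReal.ofReal r < EMetric.diam E →
    ENNReal.ofReal (r ^ k) / C ≤ μH[(k : ℝ)] (E ∩ ball x r) ∧
    μH[(k : ℝ)] (E ∩ ball x r) ≤ (C : ℝ≥0∞) * ENNReal.ofReal (r ^ k)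

lemma coord_le_dist' {m : ℕ} (x y : EuclideanSpace ℝ (Fin m)) (j : Fin m) :
    |x j - y j| ≤ dist x y := by
  rw [EuclideanSpace.dist_eq]
  rw [← Real.sqrt_sq_eq_abs]
  apply Real.sqrt_le_sqrt
  have h2 : (x j - y j)^2 = dist (x j) (y j) ^ 2 := by rw [Real.dist_eq, sq_abs]
  rw [h2]
  exact Finset.single_le_sum (f := fun i => dist (x i) (y i)^2) (fun i _ => sq_nonneg _)
    (Finset.mem_univ j)

lemma norm_le_of_sq' {m : ℕ} (x : EuclideanSpace ℝ (Fin m)) (b : ℝ) (hb : 0 ≤ b)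
    (hab : ∑ j, ‖x j‖^2 ≤ b^2) : ‖x‖ ≤ b := by
  rw [EuclideanSpace.norm_eq]
  calc Real.sqrt (∑ j, ‖x j‖^2) ≤ Real.sqrt (b^2) := Real.sqrt_le_sqrt hab
  _ = b := by rw [Real.sqrt_sq hb]

lemma one_le_abs_cast_sub' {a b : ℕ} (h : a ≠ b) : (1:ℝ) ≤ |(a:ℝ) - (b:ℝ)| := by
  have h0 : ((a:ℤ) - b) ≠ 0 := sub_ne_zero.mpr (by exact_mod_cast h)
  have h1 : (1:ℤ) ≤ |(a:ℤ) - (b:ℤ)| := Int.one_le_abs h0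
  have h2 : (1:ℝ) ≤ |(((a:ℤ) - (b:ℤ) : ℤ) : ℝ)| := by exact_mod_cast h1
  rwa [Int.cast_sub, Int.cast_natCast, Int.cast_natCast] at h2

set_option maxHeartbeats 2000000 in
/-- Lemma 2.2 of the paper: if `E ⊂ ℝ^{n+1}` is ADR, `0 ∈ E`, `P = {x_{n+1} = 0}`, and
the linear approximation conditions hold at `0` at scales below `r₀` with `η` small
enough (depending only on `n` and the ADR constant), then, with `ζ = η^{n/(n+1)}` and a
constant `N = N(n, ADR)`, for every `0 < r < η r₀` there is `X⁺` with
`X⁺_{n+1} > 4ζr`, `|X⁺| < r`, `dist(X⁺, E) ≥ 4ζr/N`; in particular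
`B(X⁺, 2ζr/N) ⊂ B(0, 2r) \ E`. -/
theorem stmt8 (n : ℕ) (hn : 1 ≤ n) (C₀ : ℝ≥0) :
    ∃ N η₀ : ℝ, 1 ≤ N ∧ 0 < η₀ ∧ η₀ < 1 ∧
      ∀ E : Set (EuclideanSpace ℝ (Fin (n + 1))), IsClosed E → ADR n E C₀ →
        (0 : EuclideanSpace ℝ (Fin (n + 1))) ∈ E →
        ∀ η lam r₀ : ℝ, 0 < η → η < η₀ → 0 < lam → 0 < r₀ →
        (∀ ρ : ℝ, 0 < ρ → ρ < r₀ →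
          (∀ X : EuclideanSpace ℝ (Fin (n + 1)), X (Fin.last n) = 0 →
            X ∈ ball (0 : EuclideanSpace ℝ (Fin (n + 1))) ρ →
            ENNReal.ofReal (lam * ρ ^ n) ≤ μH[(n : ℝ)] (E ∩ ball X (η * ρ))) ∧
          μH[(n : ℝ)] ((E ∩ ball (0 : EuclideanSpace ℝ (Fin (n + 1))) ρ) \
              {x : EuclideanSpace ℝ (Fin (n + 1)) | |x (Fin.last n)| ≤ η * ρ})
            < ENNReal.ofReal (η * ρ ^ n)) →
        ∀ r : ℝ, 0 < r → r < η * r₀ →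
          ∃ X : EuclideanSpace ℝ (Fin (n + 1)),
            4 * η ^ ((n : ℝ) / (n + 1)) * r < X (Fin.last n) ∧ ‖X‖ < r ∧
            4 * η ^ ((n : ℝ) / (n + 1)) * r / N ≤ Metric.infDist X E ∧
            ball X (2 * η ^ ((n : ℝ) / (n + 1)) * r / N) ⊆
              ball (0 : EuclideanSpace ℝ (Fin (n + 1))) (2 * r) \ E := by
  have hsn : 0 < Real.sqrt n := Real.sqrt_pos.mpr (by exact_mod_cast hn)
  set w : ℝ := 1 / (120 * Real.sqrt n) with hw
  have hw0 : 0 < w := by positivity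
  set η₀ : ℝ := min (w ^ n / ((C₀ : ℝ) + 1)) (1 / (1600 * n)) / 2 with hη₀
  have hη₀pos : 0 < η₀ := by
    apply div_pos _ two_pos
    apply lt_min (by positivity) (by positivity)
  have hη₀B : η₀ < 1 / (1600 * n) := by
    have h1 : η₀ ≤ (1 / (1600 * n)) / 2 :=
      div_le_div_of_nonneg_right (min_le_right _ _) (by norm_num : (0:ℝ) ≤ 2)
    have h2 : (0:ℝ) < 1 / (1600 * n) := by positivity
    linarith
  have hη₀A : η₀ < w ^ n / ((C₀ : ℝ) + 1) := by
    have h1 : η₀ ≤ (w ^ n / ((C₀ : ℝ) + 1)) / 2 :=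
      div_le_div_of_nonneg_right (min_le_left _ _) (by norm_num : (0:ℝ) ≤ 2)
    have h2 : (0:ℝ) < w ^ n / ((C₀ : ℝ) + 1) := by positivity
    linarith
  have hn1 : (1:ℝ) ≤ (n:ℝ) := by exact_mod_cast hn
  have hη₀1 : η₀ < 1 := by
    have : (1:ℝ)/(1600*n) ≤ 1/1600 := by
      apply one_div_le_one_div_of_le (by norm_num) (by nlinarith)
    linarith
  refine ⟨4, η₀, by norm_num, hη₀pos, hη₀1, ?_⟩
  intro E hEclosed hADR h0E η lam r₀ hη hηη₀ hlam hr₀ hcond r hr hrη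
  have hC1 : (1:ℝ) ≤ (C₀ : ℝ) := by exact_mod_cast hADR.1
  have hη1 : η < 1 := hηη₀.trans hη₀1
  have hηn : η < 1 / (1600 * n) := hηη₀.trans hη₀B
  have hn1' : (1:ℝ) ≤ (n:ℝ) := by exact_mod_cast hn
  have hηs : η < 1/1600 := by
    have h' : (1:ℝ)/(1600*n) ≤ 1/1600 := by
      apply one_div_le_one_div_of_le (by norm_num) (by nlinarith)
    linarith
  have hηr₀ : η * r₀ < (1/1600) * r₀ := mul_lt_mul_of_pos_right hηs hr₀
  set ζ : ℝ := η ^ ((n : ℝ) / (n + 1)) with hζ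
  have hζ0 : 0 < ζ := Real.rpow_pos_of_pos hη _
  have hexp1 : (n : ℝ) / (n + 1) < 1 := by
    rw [div_lt_one (by positivity)]; linarith
  have hexp2 : (1:ℝ)/2 ≤ (n : ℝ) / (n + 1) := by
    rw [le_div_iff₀ (by positivity)]; nlinarith
  have hηζ : η < ζ := by
    have := Real.rpow_lt_rpow_of_exponent_gt hη hη1 hexp1
    rwa [Real.rpow_one] at this
  have hζsq : ζ ≤ Real.sqrt η := by
    rw [Real.sqrt_eq_rpow]
    exact Real.rpow_le_rpow_of_exponent_ge hη hη1.le hexp2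
  have hζb : ζ < 1 / (40 * Real.sqrt n) := by
    have h1 : Real.sqrt η < Real.sqrt (1 / (1600 * n)) := Real.sqrt_lt_sqrt hη.le hηn
    have h2 : Real.sqrt (1 / (1600 * n)) = 1 / (40 * Real.sqrt n) := by
      rw [one_div, Real.sqrt_inv, show (1600:ℝ)*(n:ℝ) = 40^2 * (n:ℝ) by norm_num,
        Real.sqrt_mul (by positivity), Real.sqrt_sq (by norm_num), one_div]
    calc ζ ≤ Real.sqrt η := hζsq
    _ < _ := by rw [← h2]; exact h1
  have hζ1 : ζ < 1 := by
    have : (1:ℝ) / (40 * Real.sqrt n) ≤ 1 := by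
      rw [div_le_one (by positivity)]
      nlinarith [Real.sq_sqrt (le_of_lt (lt_of_lt_of_le one_pos hn1)), Real.sqrt_nonneg (n:ℝ),
        Real.one_le_sqrt.mpr hn1]
    linarith
  -- key existence
  have key : ∃ X : EuclideanSpace ℝ (Fin (n+1)),
      4*ζ*r < X (Fin.last n) ∧ ‖X‖ < r ∧ ζ*r ≤ Metric.infDist X E := by
    by_contra hcon
    push_neg at hcon
    have hEne : E.Nonempty := ⟨0, h0E⟩
    have hζr : 0 < ζ * r := mul_pos hζ0 hr
    -- grid size
    set a : ℝ := 1 / (20 * Real.sqrt n * ζ) with ha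
    have ha2 : 2 < a := by
      rw [ha, lt_div_iff₀ (by positivity)]
      have h' := hζb
      rw [lt_div_iff₀ (by positivity)] at h'
      nlinarith
    set M : ℕ := ⌊a⌋₊ with hM
    have hMa : (M:ℝ) ≤ a := Nat.floor_le (by positivity)
    have hMlow : a / 2 ≤ (M:ℝ) := by
      have h1 := Nat.lt_floor_add_one a
      rw [← hM] at h1
      linarith
    have hMζ : 3 * w ≤ (M:ℝ) * ζ := by
      have h1 : a * ζ = 1 / (20 * Real.sqrt n) := by
        rw [ha]; field_simp
      have h2 : (3:ℝ) * w = 1 / (40 * Real.sqrt n) := by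
        rw [hw]; field_simp; ring
      have h3 : a / 2 * ζ ≤ (M:ℝ) * ζ := mul_le_mul_of_nonneg_right hMlow hζ0.le
      have h4 : a / 2 * ζ = 1 / (40 * Real.sqrt n) := by
        rw [ha]; field_simp; ring
      linarith
    -- grid points
    set d : ℝ := 5 * ζ * r with hd
    have hd0 : 0 < d := by rw [hd]; positivity
    set P : (Fin n → Fin M) → EuclideanSpace ℝ (Fin (n+1)) :=
      fun k => WithLp.toLp 2 (fun j => if hj : (j:ℕ) < n then (((k ⟨j, hj⟩ : ℕ) : ℝ) + 1) * d else d) with hP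
    have hPapp : ∀ k (j : Fin (n+1)),
        P k j = if hj : (j:ℕ) < n then (((k ⟨j, hj⟩ : ℕ) : ℝ) + 1) * d else d := fun k j => rfl
    have hPlast : ∀ k, P k (Fin.last n) = d := by
      intro k
      rw [hPapp, dif_neg]
      simp [Fin.last]
    have hM1 : (1:ℝ) ≤ (M:ℝ) := by
      have : (2:ℕ) ≤ M := Nat.le_floor (by exact_mod_cast ha2.le)
      exact_mod_cast le_trans (by norm_num) this
    have hPcoord : ∀ k (j : Fin (n+1)), |P k j| ≤ (M:ℝ) * d := by
      intro k j
      rw [hPapp]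
      split_ifs with hj
      · rw [abs_of_nonneg (by positivity)]
        have h1 : (k ⟨j, hj⟩ : ℕ) + 1 ≤ M := (k ⟨j, hj⟩).isLt
        have h2 : ((k ⟨j, hj⟩ : ℕ) : ℝ) + 1 ≤ (M:ℝ) := by exact_mod_cast h1
        nlinarith
      · rw [abs_of_nonneg hd0.le]
        nlinarith
    have hMd : (M:ℝ) * d ≤ r / (4 * Real.sqrt n) := by
      have h1 : (M:ℝ) * d ≤ a * d := mul_le_mul_of_nonneg_right hMa hd0.le
      have h2 : a * d = r / (4 * Real.sqrt n) := by
        rw [ha, hd]; field_simp; ring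
      linarith
    have hPnorm : ∀ k, ‖P k‖ < r := by
      intro k
      have hb : ‖P k‖ ≤ r / 2 := by
        apply norm_le_of_sq' _ _ (by positivity)
        have h1 : ∀ j : Fin (n+1), ‖P k j‖ ^ 2 ≤ ((M:ℝ) * d) ^ 2 := by
          intro j
          rw [Real.norm_eq_abs]
          exact pow_le_pow_left₀ (abs_nonneg _) (hPcoord k j) 2
        calc ∑ j, ‖P k j‖ ^ 2 ≤ ∑ _j : Fin (n+1), ((M:ℝ) * d) ^ 2 :=
              Finset.sum_le_sum (fun j _ => h1 j)
        _ = ((n:ℝ) + 1) * ((M:ℝ) * d) ^ 2 := by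
              rw [Finset.sum_const, Finset.card_univ, Fintype.card_fin, nsmul_eq_mul]
              push_cast; ring
        _ ≤ (r / 2) ^ 2 := by
              have h2 : ((M:ℝ) * d) ^ 2 ≤ (r / (4 * Real.sqrt n)) ^ 2 :=
                pow_le_pow_left₀ (by positivity) hMd 2
              have h3 : (r / (4 * Real.sqrt n)) ^ 2 = r ^ 2 / (16 * n) := by
                rw [div_pow]
                congr 1
                rw [mul_pow]
                rw [Real.sq_sqrt (by positivity : (0:ℝ) ≤ (n:ℝ))]
                norm_num
              have h4 : ((n:ℝ) + 1) ≤ 2 * n := by linarith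
              have h5 : (0:ℝ) < (n:ℝ) := by linarith
              calc ((n:ℝ) + 1) * ((M:ℝ) * d) ^ 2 ≤ (2 * n) * (r ^ 2 / (16 * n)) := by
                    apply mul_le_mul h4 (h2.trans h3.le) (by positivity) (by positivity)
              _ ≤ (r/2)^2 := by
                    have hne : (n:ℝ) ≠ 0 := by positivity
                    have e : (2:ℝ) * n * (r^2 / (16*n)) = r^2/8 := by
                      field_simp; ring
                    rw [e]
                    nlinarith [sq_nonneg r]
      linarith
    have hPsep : ∀ k k', k ≠ k' → d ≤ dist (P k) (P k') := by
      intro k k' hkk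
      obtain ⟨j, hj⟩ := Function.ne_iff.mp hkk
      set j' : Fin (n+1) := Fin.castSucc j with hj'
      have hjlt : (j' : ℕ) < n := by simp [hj']
      have e1 : P k j' = ((k j : ℕ) : ℝ) * d + d := by
        rw [hPapp, dif_pos hjlt]
        have : (⟨(j' : ℕ), hjlt⟩ : Fin n) = j := by
          apply Fin.ext; simp [hj']
        rw [this]; ring
      have e2 : P k' j' = ((k' j : ℕ) : ℝ) * d + d := by
        rw [hPapp, dif_pos hjlt]
        have : (⟨(j' : ℕ), hjlt⟩ : Fin n) = j := by
          apply Fin.ext; simp [hj']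
        rw [this]; ring
      have h1 : (1:ℝ) ≤ |((k j : ℕ) : ℝ) - ((k' j : ℕ) : ℝ)| := by
        apply one_le_abs_cast_sub'
        intro h; apply hj; exact Fin.ext h
      have h2 : |P k j' - P k' j'| = |((k j : ℕ) : ℝ) - ((k' j : ℕ) : ℝ)| * d := by
        rw [e1, e2, show ((k j : ℕ) : ℝ) * d + d - (((k' j : ℕ) : ℝ) * d + d)
          = (((k j : ℕ) : ℝ) - ((k' j : ℕ) : ℝ)) * d by ring, abs_mul, abs_of_pos hd0]
      have h3 := coord_le_dist' (P k) (P k') j'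
      rw [h2] at h3
      nlinarith
    -- choose nearby points of E
    have hY : ∀ k, ∃ y ∈ E, dist (P k) y < ζ * r := by
      intro k
      have hlt : Metric.infDist (P k) E < ζ * r := by
        apply hcon (P k) _ (hPnorm k)
        rw [hPlast, hd]
        nlinarith
      exact (Metric.infDist_lt_iff hEne).mp hlt
    choose Y hYE hYd using hY
    -- diameter lower bound
    have hdiam : ENNReal.ofReal (ζ * r) < EMetric.diam E := by
      have hc := (hcond (r₀/2) (by positivity) (by linarith)).1
      set j₀ : Fin (n+1) := ⟨0, by omega⟩ with hj₀
      have hne : Fin.last n ≠ j₀ := by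
        simp only [Fin.ne_iff_vne, hj₀, Fin.last]
        omega
      have hpt : ∀ c : ℝ, |c| < r₀/2 → ∃ y ∈ E, dist (EuclideanSpace.single j₀ c) y < η * (r₀/2) := by
        intro c hc'
        have hX0 : (EuclideanSpace.single j₀ c) (Fin.last n) = 0 := by
          rw [EuclideanSpace.single_apply, if_neg hne]
        have hXb : EuclideanSpace.single j₀ c ∈ ball (0 : EuclideanSpace ℝ (Fin (n+1))) (r₀/2) := by
          rw [mem_ball_zero_iff, EuclideanSpace.norm_single, Real.norm_eq_abs]
          exact hc'
        have hμ := hc _ hX0 hXb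
        have hpos : (0:ℝ≥0∞) < μH[(n : ℝ)] (E ∩ ball (EuclideanSpace.single j₀ c) (η * (r₀/2))) := by
          refine lt_of_lt_of_le ?_ hμ
          apply ENNReal.ofReal_pos.mpr
          positivity
        obtain ⟨y, hy⟩ := MeasureTheory.nonempty_of_measure_ne_zero hpos.ne'
        exact ⟨y, hy.1, by have := mem_ball.mp hy.2; rwa [dist_comm]⟩
      obtain ⟨y₁, hy₁E, hy₁⟩ := hpt (r₀/4) (by rw [abs_of_pos (by positivity)]; linarith)
      obtain ⟨y₂, hy₂E, hy₂⟩ := hpt (-(r₀/4)) (by rw [abs_neg, abs_of_pos (by positivity)]; linarith)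
      have hXX : r₀/2 ≤ dist (EuclideanSpace.single j₀ (r₀/4)) (EuclideanSpace.single j₀ (-(r₀/4))) := by
        have h1 := coord_le_dist' (EuclideanSpace.single j₀ (r₀/4))
          (EuclideanSpace.single j₀ (-(r₀/4))) j₀
        rw [EuclideanSpace.single_apply, if_pos rfl, EuclideanSpace.single_apply, if_pos rfl] at h1
        rw [show r₀/4 - -(r₀/4) = r₀/2 by ring, abs_of_pos (by positivity)] at h1
        exact h1
      have hyy : ζ * r < dist y₁ y₂ := by
        have ht : dist (EuclideanSpace.single j₀ (r₀/4)) (EuclideanSpace.single j₀ (-(r₀/4)))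
            ≤ dist (EuclideanSpace.single j₀ (r₀/4)) y₁ + dist y₁ y₂
              + dist y₂ (EuclideanSpace.single j₀ (-(r₀/4))) := dist_triangle4 _ _ _ _
        rw [dist_comm y₂] at ht
        have hη4 : η * (r₀/2) < r₀ / 8 := by nlinarith [mul_lt_mul_of_pos_right hηs hr₀]
        have hζrr : ζ * r < r := by nlinarith [mul_lt_mul_of_pos_right hζ1 hr]
        have hrr : r < r₀ / 4 := by nlinarith
        linarith
      calc ENNReal.ofReal (ζ * r) < ENNReal.ofReal (dist y₁ y₂) :=
            (ENNReal.ofReal_lt_ofReal_iff_of_nonneg hζr.le).mpr hyy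
      _ = edist y₁ y₂ := (edist_dist y₁ y₂).symm
      _ ≤ EMetric.diam E := EMetric.edist_le_diam_of_mem hy₁E hy₂E
    -- measure lower bound for each ball
    have hlowm : ∀ k, ENNReal.ofReal ((ζ*r)^n) / (C₀ : ℝ≥0∞)
        ≤ μH[(n : ℝ)] (E ∩ ball (Y k) (ζ*r)) :=
      fun k => (hADR.2 (Y k) (hYE k) (ζ*r) hζr hdiam).1
    set A : (Fin n → Fin M) → Set (EuclideanSpace ℝ (Fin (n+1))) :=
      fun k => E ∩ ball (Y k) (ζ*r) with hA
    have hmeas : ∀ k, MeasurableSet (A k) :=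
      fun k => hEclosed.measurableSet.inter measurableSet_ball
    have hdisj : Set.PairwiseDisjoint ((Finset.univ : Finset (Fin n → Fin M)) : Set (Fin n → Fin M)) A := by
      intro k _ k' _ hkk
      refine Disjoint.mono inter_subset_right inter_subset_right ?_
      apply ball_disjoint_ball
      have h1 := hPsep k k' hkk
      have h2 := hYd k
      have h3 := hYd k'
      have ht : dist (P k) (P k') ≤ dist (P k) (Y k) + dist (Y k) (Y k') + dist (Y k') (P k') :=
        dist_triangle4 _ _ _ _
      rw [dist_comm (Y k')] at ht
      rw [hd] at h1
      linarith
    have hsub : ∀ k, A k ⊆ (E ∩ ball (0 : EuclideanSpace ℝ (Fin (n+1))) (3*r)) \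
        {x : EuclideanSpace ℝ (Fin (n+1)) | |x (Fin.last n)| ≤ η * (3*r)} := by
      intro k y hy
      obtain ⟨hyE', hyb⟩ := hy
      rw [mem_ball] at hyb
      have hYP := hYd k
      constructor
      · refine ⟨hyE', ?_⟩
        rw [mem_ball]
        have ht : dist y 0 ≤ dist y (Y k) + dist (Y k) (P k) + dist (P k) 0 :=
          dist_triangle4 _ _ _ _
        have h2 : dist (P k) (0 : EuclideanSpace ℝ (Fin (n+1))) = ‖P k‖ := dist_zero_right _
        have h3 := hPnorm k
        rw [dist_comm (Y k)] at ht
        have hζrr : ζ * r < r := by nlinarith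
        rw [h2] at ht
        linarith
      · intro hmem
        simp only [mem_setOf_eq] at hmem
        have c1 := coord_le_dist' y (Y k) (Fin.last n)
        have c2 := coord_le_dist' (Y k) (P k) (Fin.last n)
        rw [hPlast] at c2
        have c1' := neg_le_of_abs_le (c1.trans hyb.le)
        have hYd' : dist (Y k) (P k) < ζ * r := by rw [dist_comm]; exact hYd k
        have c2' := neg_le_of_abs_le (c2.trans hYd'.le)
        have c3 : y (Fin.last n) ≤ |y (Fin.last n)| := le_abs_self _
        rw [hd] at c2'
        have hζη3 : η * (3*r) < 3 * (ζ * r) := by nlinarith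
        linarith
    have h3r : 3*r < r₀ := by nlinarith
    have hii := (hcond (3*r) (by positivity) h3r).2
    have hsum : ((M:ℝ≥0∞))^n * (ENNReal.ofReal ((ζ*r)^n) / (C₀ : ℝ≥0∞))
        ≤ ENNReal.ofReal (η * (3*r)^n) := by
      have hcard : (Finset.univ : Finset (Fin n → Fin M)).card = M ^ n := by
        rw [Finset.card_univ]
        simp [Fintype.card_fun]
      calc ((M:ℝ≥0∞))^n * (ENNReal.ofReal ((ζ*r)^n) / (C₀ : ℝ≥0∞))
          = ∑ _k : Fin n → Fin M, (ENNReal.ofReal ((ζ*r)^n) / (C₀ : ℝ≥0∞)) := by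
            rw [Finset.sum_const, hcard, nsmul_eq_mul]
            push_cast
            ring
        _ ≤ ∑ k : Fin n → Fin M, μH[(n : ℝ)] (A k) :=
            Finset.sum_le_sum (fun k _ => hlowm k)
        _ = μH[(n : ℝ)] (⋃ k ∈ (Finset.univ : Finset (Fin n → Fin M)), A k) :=
            (measure_biUnion_finset hdisj (fun k _ => hmeas k)).symm
        _ ≤ μH[(n : ℝ)] ((E ∩ ball (0 : EuclideanSpace ℝ (Fin (n+1))) (3*r)) \
            {x : EuclideanSpace ℝ (Fin (n+1)) | |x (Fin.last n)| ≤ η * (3*r)}) := by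
            apply measure_mono
            exact Set.iUnion₂_subset (fun k _ => hsub k)
        _ ≤ ENNReal.ofReal (η * (3*r)^n) := hii.le
    have hC0 : (0:ℝ) < (C₀ : ℝ) := by linarith
    have hreal : (M:ℝ)^n * (ζ*r)^n / (C₀:ℝ) ≤ η * (3*r)^n := by
      have hL : ENNReal.ofReal ((M:ℝ)^n * (ζ*r)^n / (C₀:ℝ))
          = ((M:ℝ≥0∞))^n * (ENNReal.ofReal ((ζ*r)^n) / (C₀ : ℝ≥0∞)) := by
        rw [ENNReal.ofReal_div_of_pos hC0, ENNReal.ofReal_mul (by positivity),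
          ENNReal.ofReal_pow (by positivity), ENNReal.ofReal_natCast,
          ENNReal.ofReal_coe_nnreal, mul_div_assoc]
      have h' := hsum
      rw [← hL] at h'
      exact (ENNReal.ofReal_le_ofReal_iff (by positivity)).mp h'
    have h1 : (3*w)^n ≤ ((M:ℝ)*ζ)^n := pow_le_pow_left₀ (by positivity) hMζ n
    have h2 : (M:ℝ)^n * (ζ*r)^n = ((M:ℝ)*ζ)^n * r^n := by
      rw [← mul_pow, ← mul_pow]; ring_nf
    have h3 : (3*w)^n * r^n / (C₀:ℝ) ≤ η * (3*r)^n := by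
      rw [h2] at hreal
      have : (3*w)^n * r^n ≤ ((M:ℝ)*ζ)^n * r^n :=
        mul_le_mul_of_nonneg_right h1 (by positivity)
      calc (3*w)^n * r^n / (C₀:ℝ) ≤ ((M:ℝ)*ζ)^n * r^n / (C₀:ℝ) := by gcongr ?_ / _
      _ ≤ η * (3*r)^n := hreal
    have h4 : w^n / (C₀:ℝ) ≤ η := by
      have h5 : (3*w)^n = 3^n * w^n := by rw [mul_pow]
      have h6 : (3*r)^n = 3^n * r^n := by rw [mul_pow]
      rw [h5, h6] at h3
      have h7 : (0:ℝ) < 3^n * r^n := by positivity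
      rw [div_le_iff₀ hC0] at h3 ⊢
      have := h3
      nlinarith [pow_pos hr n, pow_pos (show (0:ℝ) < 3 by norm_num) n]
    have h8 : η < w^n / ((C₀:ℝ)+1) := hηη₀.trans hη₀A
    have h9 : w^n / ((C₀:ℝ)+1) ≤ w^n / (C₀:ℝ) := by
      apply div_le_div_of_nonneg_left (by positivity) hC0 (by linarith)
    linarith
  obtain ⟨X, hX1, hX2, hX3⟩ := key
  refine ⟨X, by linarith [hX1], hX2, ?_, ?_⟩
  · have : 4 * ζ * r / 4 = ζ * r := by ring
    rw [this]; exact hX3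
  · intro y hy
    rw [mem_ball] at hy
    have hyX : dist y X < ζ * r / 2 := by
      have : 2 * ζ * r / 4 = ζ * r / 2 := by ring
      rwa [this] at hy
    constructor
    · rw [mem_ball]
      have h1 : dist y 0 ≤ dist y X + dist X 0 := dist_triangle _ _ _
      have h2 : dist X 0 = ‖X‖ := by simp [dist_eq_norm]
      have h3 : ζ * r / 2 < r := by nlinarith
      rw [h2] at h1; linarith
    · intro hyE
      have h1 : Metric.infDist X E ≤ dist X y := Metric.infDist_le_dist_of_mem hyE
      rw [dist_comm] at h1
      have := mul_pos hζ0 hr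
      linarith
end
end
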